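/- There exists a finite rotation-puzzle instance 𝒜 over the three-color tile set T_3 (the BOOL subpuzzle, representing a Boolean input variable) with one designated output boundary edge at its top, such that 𝒜 has exactly two solutions, one of which has color blue at the output edge and the other of which has color red at the output edge; in particular no solution has color yellow at the output edge. -/

import Mathlib

/-- The three Tantrix colors used in the three-color tile set. -/
inductive Color where
  | red
  | yellow
  | blue
deriving DecidableEq

/-- A tile is its clockwise color sequence: a word of length 6 over the colors,
edges indexed `0, …, 5` clockwise. -/
abbrev Tile := Fin 6 → Color

/-- Cyclic rotation of a tile by `k` steps: edge `i` of the rotated tile carries the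
color of edge `i + k` of the original sequence. -/
def rotTile (k : Fin 6) (t : Tile) : Tile := fun i => t (i + k)

open Color in
/-- The three-color tile set `T₃`, consisting of the 14 color sequences
yrrbby, ryybbr, yrrybb, ryyrbb, brrbyy, yrbybr, rbyryb, brybyr, brbyyr, bybrry,
ryrbby, rbryyb, ybyrrb, yrybbr. -/
def T3 : Set Tile :=
  { ![yellow,red,red,blue,blue,yellow],
    ![red,yellow,yellow,blue,blue,red],
    ![yellow,red,red,yellow,blue,blue],
    ![red,yellow,yellow,red,blue,blue],
    ![blue,red,red,blue,yellow,yellow],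
    ![yellow,red,blue,yellow,blue,red],
    ![red,blue,yellow,red,yellow,blue],
    ![blue,red,yellow,blue,yellow,red],
    ![blue,red,blue,yellow,yellow,red],
    ![blue,yellow,blue,red,red,yellow],
    ![red,yellow,red,blue,blue,yellow],
    ![red,blue,red,yellow,yellow,blue],
    ![yellow,blue,yellow,red,red,blue],
    ![yellow,red,yellow,blue,blue,red] }

/-- The six neighbor offsets of the hexagonal layout of `ℤ²`, listed clockwise
starting from straight up; edge `i` of a tile at `x` is the edge shared with the
neighboring point `x + dirs i`, and opposite directions differ by `3` (mod 6).
Two points are neighbors exactly if their difference is one of these offsets. -/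
def dirs : Fin 6 → ℤ × ℤ := ![(0,1), (1,1), (1,0), (0,-1), (-1,-1), (-1,0)]

/-- A finite rotation-puzzle instance over the tile set `T3`:
a function from a finite set of points of `ℤ²` to `T3`. -/
structure Puzzle where
  tiles : ℤ × ℤ → Option Tile
  finite : {x | tiles x ≠ none}.Finite
  memT3 : ∀ x t, tiles x = some t → t ∈ T3

/-- `sol` is a solution of the instance `P`: it assigns to each occupied point a
cyclic rotation of the tile placed there, such that for every pair of neighboring
occupied points the two assigned sequences give the same color to their joint edge
(edge `d` of the tile at `x` is glued to edge `d + 3` of the tile at `x + dirs d`). -/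
def IsSolution (P : Puzzle) (sol : ℤ × ℤ → Option Tile) : Prop :=
  (∀ x, (P.tiles x = none → sol x = none) ∧
    (∀ t, P.tiles x = some t → ∃ k : Fin 6, sol x = some (rotTile k t))) ∧
  (∀ (x : ℤ × ℤ) (d : Fin 6) (s s' : Tile),
    sol x = some s → sol (x + dirs d) = some s' → s d = s' (d + 3))

/-- `(x, d)` is a boundary edge of `P`: the point `x` is occupied and its
neighbor in direction `d` is not. -/
def IsBoundary (P : Puzzle) (x : ℤ × ℤ) (d : Fin 6) : Prop :=
  P.tiles x ≠ none ∧ P.tiles (x + dirs d) = none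

/-- The solution `sol` has color `c` at the edge in direction `d` of the tile at `x`. -/
def SolColor (sol : ℤ × ℤ → Option Tile) (x : ℤ × ℤ) (d : Fin 6) (c : Color) : Prop :=
  ∃ s, sol x = some s ∧ s d = c


open Color in
/-- Tile `yrrbby`, used at the three points `A, B, C` of the BOOL instance. -/
def tA : Tile := ![yellow,red,red,blue,blue,yellow]

open Color in
/-- Tile `rbryyb`, used at the point `D` of the BOOL instance. -/
def tD : Tile := ![red,blue,red,yellow,yellow,blue]

/-- Tile placement of the BOOL instance. -/
def Pt : ℤ × ℤ → Option Tile := fun x =>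
  if x = (0,0) then some tA
  else if x = (1,1) then some tA
  else if x = (1,0) then some tA
  else if x = (2,1) then some tD
  else none

def BoolP : Puzzle where
  tiles := Pt
  finite := by
    apply Set.Finite.subset
      (((((Set.finite_singleton ((2:ℤ),(1:ℤ))).insert ((1:ℤ),(0:ℤ))).insert
        ((1:ℤ),(1:ℤ))).insert ((0:ℤ),(0:ℤ))))
    intro x hx
    simp only [Set.mem_setOf_eq, Pt] at hx
    simp only [Set.mem_insert_iff, Set.mem_singleton_iff]
    by_contra hc
    push_neg at hc
    split_ifs at hx with h1 h2 h3 h4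
    · exact hc.1 h1
    · exact hc.2.1 h2
    · exact hc.2.2.1 h3
    · exact hc.2.2.2 h4
    · exact hx rfl
  memT3 := by
    intro x t ht
    simp only [Pt] at ht
    split_ifs at ht <;> injection ht with h <;> subst h
    · exact Set.mem_insert _ _
    · exact Set.mem_insert _ _
    · exact Set.mem_insert _ _
    · simp [T3, tD]

def sol1 : ℤ × ℤ → Option Tile := fun x =>
  if x = (0,0) then some (rotTile 4 tA)
  else if x = (1,1) then some (rotTile 2 tA)
  else if x = (1,0) then some (rotTile 0 tA)
  else if x = (2,1) then some (rotTile 2 tD)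
  else none

def sol2 : ℤ × ℤ → Option Tile := fun x =>
  if x = (0,0) then some (rotTile 1 tA)
  else if x = (1,1) then some (rotTile 3 tA)
  else if x = (1,0) then some (rotTile 5 tA)
  else if x = (2,1) then some (rotTile 5 tD)
  else none

lemma isSol1 : IsSolution BoolP sol1 := by
  constructor
  · intro x
    constructor
    · intro h
      simp only [BoolP, Pt] at h
      split_ifs at h
      simp_all [sol1]
    · intro t ht
      simp only [BoolP, Pt] at ht
      split_ifs at ht with h1 h2 h3 h4 <;> injection ht with h <;> subst h
      · exact ⟨4, by simp [sol1, h1]⟩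
      · exact ⟨2, by simp [sol1, h1, h2]⟩
      · exact ⟨0, by simp [sol1, h1, h2, h3]⟩
      · exact ⟨2, by simp [sol1, h1, h2, h3, h4]⟩
  · intro x d s s' hs hs'
    simp only [sol1] at hs
    split_ifs at hs with h1 h2 h3 h4 <;> injection hs with hs <;> subst hs <;>
      (first | subst h1 | subst h2 | subst h3 | subst h4) <;>
      fin_cases d <;>
      simp only [sol1, dirs, Matrix.cons_val_zero, Matrix.cons_val_one] at hs' ⊢ <;>
      norm_num [Prod.ext_iff] at hs' <;>
      (first | exact Option.noConfusion hs' | exact absurd hs'.symm (Option.some_ne_none _) | (subst hs'; decide))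

lemma isSol2 : IsSolution BoolP sol2 := by
  constructor
  · intro x
    constructor
    · intro h
      simp only [BoolP, Pt] at h
      split_ifs at h
      simp_all [sol2]
    · intro t ht
      simp only [BoolP, Pt] at ht
      split_ifs at ht with h1 h2 h3 h4 <;> injection ht with h <;> subst h
      · exact ⟨1, by simp [sol2, h1]⟩
      · exact ⟨3, by simp [sol2, h1, h2]⟩
      · exact ⟨5, by simp [sol2, h1, h2, h3]⟩
      · exact ⟨5, by simp [sol2, h1, h2, h3, h4]⟩
  · intro x d s s' hs hs'
    simp only [sol2] at hs
    split_ifs at hs with h1 h2 h3 h4 <;> injection hs with hs <;> subst hs <;>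
      (first | subst h1 | subst h2 | subst h3 | subst h4) <;>
      fin_cases d <;>
      simp only [sol2, dirs, Matrix.cons_val_zero, Matrix.cons_val_one] at hs' ⊢ <;>
      norm_num [Prod.ext_iff] at hs' <;>
      (first | exact Option.noConfusion hs' | exact absurd hs'.symm (Option.some_ne_none _) | (subst hs'; decide))

/-- Compatibility check for rotations `(j, k, l, m)` at the four points. -/
def ok (j k l m : Fin 6) : Bool :=
  decide (tA (1+j) = tA (4+k)) && decide (tA (2+j) = tA (5+l)) &&
  decide (tA (3+k) = tA (0+l)) && decide (tA (2+k) = tD (5+m)) &&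
  decide (tA (1+l) = tD (4+m))

lemma ok_cases : ∀ j k l m : Fin 6, ok j k l m = true →
    (j = 4 ∧ k = 2 ∧ l = 0 ∧ m = 2) ∨ (j = 1 ∧ k = 3 ∧ l = 5 ∧ m = 5) := by
  decide

theorem three_color_BOOL_subpuzzle_aux : True := trivial

/-- the three-color BOOL subpuzzle: one output boundary edge at the top; the instance has exactly two solutions, one with color blue and the other with color red at the output edge; in particular no solution has color yellow there. -/
theorem three_color_BOOL_subpuzzle :
    ∃ (P : Puzzle) (xOut : ℤ × ℤ),
      IsBoundary P xOut 0 ∧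
      ∃ sol₁ sol₂ : ℤ × ℤ → Option Tile,
        IsSolution P sol₁ ∧ IsSolution P sol₂ ∧ sol₁ ≠ sol₂ ∧
        SolColor sol₁ xOut 0 Color.blue ∧ SolColor sol₂ xOut 0 Color.red ∧
        (∀ sol : ℤ × ℤ → Option Tile, IsSolution P sol → sol = sol₁ ∨ sol = sol₂)∧
        (∀ sol : ℤ × ℤ → Option Tile, IsSolution P sol →
          ¬ SolColor sol xOut 0 Color.yellow) := by
  have hPtA : BoolP.tiles ((0:ℤ),(0:ℤ)) = some tA := by simp [BoolP, Pt]
  have hPtB : BoolP.tiles ((1:ℤ),(1:ℤ)) = some tA := by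
    simp [BoolP, Pt, Prod.ext_iff]
  have hPtC : BoolP.tiles ((1:ℤ),(0:ℤ)) = some tA := by
    simp [BoolP, Pt, Prod.ext_iff]
  have hPtD : BoolP.tiles ((2:ℤ),(1:ℤ)) = some tD := by
    simp [BoolP, Pt, Prod.ext_iff]
  have hdA1 : ((0:ℤ),(0:ℤ)) + dirs 1 = ((1:ℤ),(1:ℤ)) := by decide
  have hdA2 : ((0:ℤ),(0:ℤ)) + dirs 2 = ((1:ℤ),(0:ℤ)) := by decide
  have hdB3 : ((1:ℤ),(1:ℤ)) + dirs 3 = ((1:ℤ),(0:ℤ)) := by decide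
  have hdB2 : ((1:ℤ),(1:ℤ)) + dirs 2 = ((2:ℤ),(1:ℤ)) := by decide
  have hdC1 : ((1:ℤ),(0:ℤ)) + dirs 1 = ((2:ℤ),(1:ℤ)) := by decide
  have huniq : ∀ sol : ℤ × ℤ → Option Tile, IsSolution BoolP sol →
      sol = sol1 ∨ sol = sol2 := by
    intro sol hsol
    obtain ⟨hloc, hmatch⟩ := hsol
    obtain ⟨j, hj⟩ := (hloc ((0:ℤ),(0:ℤ))).2 tA hPtA
    obtain ⟨k, hk⟩ := (hloc ((1:ℤ),(1:ℤ))).2 tA hPtB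
    obtain ⟨l, hl⟩ := (hloc ((1:ℤ),(0:ℤ))).2 tA hPtC
    obtain ⟨m, hm⟩ := (hloc ((2:ℤ),(1:ℤ))).2 tD hPtD
    have e1 := hmatch ((0:ℤ),(0:ℤ)) 1 _ _ hj (by rw [hdA1]; exact hk)
    have e2 := hmatch ((0:ℤ),(0:ℤ)) 2 _ _ hj (by rw [hdA2]; exact hl)
    have e3 := hmatch ((1:ℤ),(1:ℤ)) 3 _ _ hk (by rw [hdB3]; exact hl)
    have e4 := hmatch ((1:ℤ),(1:ℤ)) 2 _ _ hk (by rw [hdB2]; exact hm)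
    have e5 := hmatch ((1:ℤ),(0:ℤ)) 1 _ _ hl (by rw [hdC1]; exact hm)
    have hok : ok j k l m = true := by
      simp only [ok, Bool.and_eq_true, decide_eq_true_eq]
      refine ⟨⟨⟨⟨?_, ?_⟩, ?_⟩, ?_⟩, ?_⟩
      · simpa [rotTile] using e1
      · simpa [rotTile] using e2
      · simpa [rotTile, show ((3:Fin 6)+3 = 0) from rfl] using e3
      · simpa [rotTile] using e4
      · simpa [rotTile] using e5
    rcases ok_cases j k l m hok with ⟨rfl, rfl, rfl, rfl⟩ | ⟨rfl, rfl, rfl, rfl⟩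
    · left
      funext x
      by_cases h1 : x = ((0:ℤ),(0:ℤ))
      · subst h1; rw [hj]; simp [sol1]
      by_cases h2 : x = ((1:ℤ),(1:ℤ))
      · subst h2; rw [hk]; simp [sol1, Prod.ext_iff]
      by_cases h3 : x = ((1:ℤ),(0:ℤ))
      · subst h3; rw [hl]; simp [sol1, Prod.ext_iff]
      by_cases h4 : x = ((2:ℤ),(1:ℤ))
      · subst h4; rw [hm]; simp [sol1, Prod.ext_iff]
      · rw [(hloc x).1
          (by simp only [BoolP, Pt, if_neg h1, if_neg h2, if_neg h3, if_neg h4])]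
        simp only [sol1, if_neg h1, if_neg h2, if_neg h3, if_neg h4]
    · right
      funext x
      by_cases h1 : x = ((0:ℤ),(0:ℤ))
      · subst h1; rw [hj]; simp [sol2]
      by_cases h2 : x = ((1:ℤ),(1:ℤ))
      · subst h2; rw [hk]; simp [sol2, Prod.ext_iff]
      by_cases h3 : x = ((1:ℤ),(0:ℤ))
      · subst h3; rw [hl]; simp [sol2, Prod.ext_iff]
      by_cases h4 : x = ((2:ℤ),(1:ℤ))
      · subst h4; rw [hm]; simp [sol2, Prod.ext_iff]
      · rw [(hloc x).1
          (by simp only [BoolP, Pt, if_neg h1, if_neg h2, if_neg h3, if_neg h4])]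
        simp only [sol2, if_neg h1, if_neg h2, if_neg h3, if_neg h4]
  refine ⟨BoolP, ((0:ℤ),(0:ℤ)), ⟨by rw [hPtA]; simp, ?_⟩,
    sol1, sol2, isSol1, isSol2, ?_, ?_, ?_, huniq, ?_⟩
  · show BoolP.tiles (((0:ℤ),(0:ℤ)) + dirs 0) = none
    have : (((0:ℤ),(0:ℤ)) + dirs 0) = ((0:ℤ),(1:ℤ)) := by decide
    rw [this]
    simp [BoolP, Pt, Prod.ext_iff]
  · intro h
    have h0 := congrFun h (((0:ℤ),(0:ℤ)))
    simp only [sol1, sol2, if_pos rfl, Option.some.injEq] at h0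
    exact absurd h0 (by decide)
  · exact ⟨rotTile 4 tA, by simp [sol1], by decide⟩
  · exact ⟨rotTile 1 tA, by simp [sol2], by decide⟩
  · intro sol hsol ⟨s, hs, hsy⟩
    rcases huniq sol hsol with rfl | rfl
    · simp only [sol1, if_pos rfl, Option.some.injEq, reduceIte] at hs
      subst hs; exact absurd hsy (by decide)
    · simp only [sol2, if_pos rfl, Option.some.injEq, reduceIte] at hs
      subst hs; exact absurd hsy (by decide)
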